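/- (Horizon-free bound on centered value functions.) Suppose there exists η ≥ 1 such that for every h ∈ {1, …, H} the policy-induced kernel Q_h(z|x) := P(z|x, π_h(x)) satisfies the Doeblin-type regularity condition Σ_{z∈X} min( Q_h(z|x), Q_h(z|x') ) ≥ 1/η² for all x, x' ∈ X. Then for every h ∈ {1, …, H}, every (x,a) ∈ X×A, and every y ∈ X: | V_{h+1}(y) − Σ_{z∈X} P(z|x,a)·V_{h+1}(z) | ≤ 2η² − 1. -/
import Mathlib


open Finset

private lemma overlap_bound {X : Type*} [Fintype X] (p q f : X → ℝ)
    (hp : ∀ z, 0 ≤ p z) (hq : ∀ z, 0 ≤ q z)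
    (hp1 : ∑ z, p z = 1) (hq1 : ∑ z, q z = 1)
    (m M : ℝ) (hfm : ∀ z, m ≤ f z) (hfM : ∀ z, f z ≤ M) (hmM : m ≤ M)
    (δ : ℝ) (hδ : δ ≤ ∑ z, min (p z) (q z)) :
    ∑ z, p z * f z - ∑ z, q z * f z ≤ (1 - δ) * (M - m) := by
  set S := ∑ z, min (p z) (q z) with hS
  have hA : ∑ z, (p z - min (p z) (q z)) * f z ≤ (1 - S) * M := by
    calc ∑ z, (p z - min (p z) (q z)) * f z
        ≤ ∑ z, (p z - min (p z) (q z)) * M := by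
          apply Finset.sum_le_sum
          intro z _
          exact mul_le_mul_of_nonneg_left (hfM z) (sub_nonneg.2 (min_le_left _ _))
      _ = (1 - S) * M := by
          rw [← Finset.sum_mul, Finset.sum_sub_distrib, hp1, hS]
  have hB : (1 - S) * m ≤ ∑ z, (q z - min (p z) (q z)) * f z := by
    calc (1 - S) * m = ∑ z, (q z - min (p z) (q z)) * m := by
          rw [← Finset.sum_mul, Finset.sum_sub_distrib, hq1, hS]
      _ ≤ ∑ z, (q z - min (p z) (q z)) * f z := by
          apply Finset.sum_le_sum
          intro z _
          exact mul_le_mul_of_nonneg_left (hfm z) (sub_nonneg.2 (min_le_right _ _))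
  have hEq : ∑ z, p z * f z - ∑ z, q z * f z
      = (∑ z, (p z - min (p z) (q z)) * f z) - ∑ z, (q z - min (p z) (q z)) * f z := by
    simp only [sub_mul, Finset.sum_sub_distrib]
    ring
  have h1S : 1 - S ≤ 1 - δ := by linarith
  calc ∑ z, p z * f z - ∑ z, q z * f z ≤ (1 - S) * M - (1 - S) * m := by
        rw [hEq]; linarith
    _ = (1 - S) * (M - m) := by ring
    _ ≤ (1 - δ) * (M - m) := mul_le_mul_of_nonneg_right h1S (by linarith)

/-- **Horizon-free bound on centered value functions.**
`P x a y = P(y|x,a)`, `r h x a` are the rewards, `π` is a deterministic policy, and `V`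
is the family of value functions of `π`, defined backwards from `V (H+1) = 0`.  The
policy-induced kernels `Q_h(z|x) = P(z|x,π_h(x))` satisfy a Doeblin-type regularity
condition with constant `1/η²`. -/
theorem horizon_free_centered_value_bound
    {X A : Type*} [Fintype X] [Fintype A]
    (H : ℕ) (hH : 1 ≤ H)
    (P : X → A → X → ℝ) (hP : ∀ x a, (∀ y, 0 ≤ P x a y) ∧ ∑ y, P x a y = 1)
    (r : ℕ → X → A → ℝ)
    (hr : ∀ h, 1 ≤ h → h ≤ H → ∀ x a, 0 ≤ r h x a ∧ r h x a ≤ 1)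
    (pol : ℕ → X → A)
    (η : ℝ) (hη : 1 ≤ η)
    (hdoeblin : ∀ h, 1 ≤ h → h ≤ H → ∀ x x' : X,
      1 / η ^ 2 ≤ ∑ z, min (P x (pol h x) z) (P x' (pol h x') z))
    (V : ℕ → X → ℝ)
    (hV0 : ∀ x, V (H + 1) x = 0)
    (hVrec : ∀ h, 1 ≤ h → h ≤ H → ∀ x,
      V h x = r h x (pol h x) + ∑ y, P x (pol h x) y * V (h + 1) y) :
    ∀ h, 1 ≤ h → h ≤ H → ∀ (x : X) (a : A) (y : X),
      |V (h + 1) y - ∑ z, P x a z * V (h + 1) z| ≤ 2 * η ^ 2 - 1 := by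
  have hη2 : (1:ℝ) ≤ η ^ 2 := one_le_pow₀ hη
  have hη2pos : (0:ℝ) < η ^ 2 := by positivity
  -- span bound by downward induction
  have key : ∀ k, k ≤ H → ∀ x x' : X, V (H + 1 - k) x - V (H + 1 - k) x' ≤ η ^ 2 := by
    intro k
    induction k with
    | zero =>
      intro _ x x'
      simp only [Nat.sub_zero, hV0]
      linarith
    | succ k ih =>
      intro hk x x'
      have hk' : k ≤ H := Nat.le_of_succ_le hk
      have heq : H + 1 - (k + 1) = H - k := by omega
      have heq2 : (H - k) + 1 = H + 1 - k := by omega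
      have h1 : 1 ≤ H - k := by omega
      have h2 : H - k ≤ H := by omega
      rw [heq, hVrec (H - k) h1 h2 x, hVrec (H - k) h1 h2 x']
      set f : X → ℝ := V ((H - k) + 1) with hf
      have hih : ∀ u u' : X, f u - f u' ≤ η ^ 2 := by
        intro u u'; rw [hf, heq2]; exact ih hk' u u'
      have hne : (Finset.univ : Finset X).Nonempty := ⟨x, mem_univ x⟩
      set M := Finset.univ.sup' hne f with hM
      set m := Finset.univ.inf' hne f with hm
      have hfM : ∀ z, f z ≤ M := fun z => Finset.le_sup' f (mem_univ z)
      have hfm : ∀ z, m ≤ f z := fun z => Finset.inf'_le f (mem_univ z)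
      have hmM : m ≤ M := le_trans (hfm x) (hfM x)
      have hspan : M - m ≤ η ^ 2 := by
        obtain ⟨z0, _, hz0⟩ := Finset.exists_mem_eq_sup' hne f
        obtain ⟨z1, _, hz1⟩ := Finset.exists_mem_eq_inf' hne f
        rw [← hM] at hz0; rw [← hm] at hz1
        rw [hz0, hz1]; exact hih z0 z1
      have hol := overlap_bound (P x (pol (H - k) x)) (P x' (pol (H - k) x')) f
        (hP x (pol (H - k) x)).1 (hP x' (pol (H - k) x')).1
        (hP x (pol (H - k) x)).2 (hP x' (pol (H - k) x')).2
        m M hfm hfM hmM (1 / η ^ 2) (hdoeblin (H - k) h1 h2 x x')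
      have hr1 := hr (H - k) h1 h2 x (pol (H - k) x)
      have hr2 := hr (H - k) h1 h2 x' (pol (H - k) x')
      have hcontr : (1 - 1 / η ^ 2) * (M - m) ≤ η ^ 2 - 1 := by
        have h1' : 0 ≤ 1 - 1 / η ^ 2 := by
          have : 1 / η ^ 2 ≤ 1 := by
            rw [div_le_one hη2pos]; exact hη2
          linarith
        calc (1 - 1 / η ^ 2) * (M - m) ≤ (1 - 1 / η ^ 2) * η ^ 2 :=
              mul_le_mul_of_nonneg_left hspan h1'
          _ = η ^ 2 - 1 := by field_simp
      linarith
  -- conclusion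
  intro h h1 h2 x a y
  have hkH : H - h ≤ H := Nat.sub_le _ _
  have heq : H + 1 - (H - h) = h + 1 := by omega
  have hih : ∀ u u' : X, V (h + 1) u - V (h + 1) u' ≤ η ^ 2 := by
    intro u u'
    have := key (H - h) hkH u u'
    rwa [heq] at this
  set f : X → ℝ := V (h + 1) with hf
  have hne : (Finset.univ : Finset X).Nonempty := ⟨x, mem_univ x⟩
  set M := Finset.univ.sup' hne f with hM
  set m := Finset.univ.inf' hne f with hm
  have hfM : ∀ z, f z ≤ M := fun z => Finset.le_sup' f (mem_univ z)
  have hfm : ∀ z, m ≤ f z := fun z => Finset.inf'_le f (mem_univ z)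
  have hspan : M - m ≤ η ^ 2 := by
    obtain ⟨z0, _, hz0⟩ := Finset.exists_mem_eq_sup' hne f
    obtain ⟨z1, _, hz1⟩ := Finset.exists_mem_eq_inf' hne f
    rw [← hM] at hz0; rw [← hm] at hz1
    rw [hz0, hz1]; exact hih z0 z1
  have hub : ∑ z, P x a z * f z ≤ M := by
    calc ∑ z, P x a z * f z ≤ ∑ z, P x a z * M :=
          Finset.sum_le_sum fun z _ => mul_le_mul_of_nonneg_left (hfM z) ((hP x a).1 z)
      _ = M := by rw [← Finset.sum_mul, (hP x a).2, one_mul]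
  have hlb : m ≤ ∑ z, P x a z * f z := by
    calc m = ∑ z, P x a z * m := by rw [← Finset.sum_mul, (hP x a).2, one_mul]
      _ ≤ ∑ z, P x a z * f z :=
          Finset.sum_le_sum fun z _ => mul_le_mul_of_nonneg_left (hfm z) ((hP x a).1 z)
  rw [abs_le]
  constructor
  · have := hfm y; nlinarith
  · have := hfM y; nlinarith
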